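/- Let A be a finite structure with a binary relation f and a binary relation R such that f is acyclic (no element is f-reachable in one or more steps from itself) and A satisfies T1[f]: for all u,v, R(u,v) iff u = v or there exists w with f(u,w) and R(w,v). Then R equals the reflexive transitive closure of f. -/
import Mathlib


theorem stmt_0 {V : Type*} [Fintype V] (f R : V → V → Prop)
    (hacyc : ∀ a : V, ¬ Relation.TransGen f a a)
    (hT1 : ∀ u v : V, R u v ↔ (u = v ∨ ∃ w, f u w ∧ R w v)) :
    ∀ u v : V, R u v ↔ Relation.ReflTransGen f u v := by
  have hwf : WellFounded (fun a b : V => Relation.TransGen f b a) := by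
    have : IsIrrefl V fun a b : V => Relation.TransGen f b a := ⟨fun a h => hacyc a h⟩
    have : IsTrans V fun a b : V => Relation.TransGen f b a := ⟨fun _ _ _ h1 h2 => h2.trans h1⟩
    exact Finite.wellFounded_of_trans_of_irrefl _
  intro u v
  constructor
  · intro hR
    induction u using hwf.induction with
    | _ u ih =>
      rcases (hT1 u v).mp hR with rfl | ⟨w, hfw, hRw⟩
      · exact Relation.ReflTransGen.refl
      · exact Relation.ReflTransGen.head hfw (ih w (Relation.TransGen.single hfw) hRw)
  · intro h
    induction h using Relation.ReflTransGen.head_induction_on with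
    | refl => exact (hT1 v v).mpr (Or.inl rfl)
    | head hfw _ ih => exact (hT1 _ v).mpr (Or.inr ⟨_, hfw, ih⟩)
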